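/- arXiv:2106.02701 — 3 statements merged into one kernel-verified Lean document; each statement's English description precedes it below -/
import Mathlib

section
/- Let s₁,...,sₙ be a Markov chain and suppose the image random field over domain D splits as conditionally independent given the states, with foreground fragment likelihoods α₁(I_F) = Π_{y∈F} α₁(I_y) and background α₀ similarly. Then the joint probability factors as p(s_{1:n}, I_D) = Π_{i=2}^n (α₁(I_{F_i})/α₀(I_{F_i}))^{δ(F_i ⊆ D \ F_{1:i-1})} · p(s_i | s_{i-1}) · p(s₁, I_D), where F_i = F(s_i) is the fragment of state s_i, F_{1:i-1} is the union of the first i-1 fragments, and δ is the indicator function. -/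
/-- The union of the fragments of the first `k` states (`F_{1:k}` in the paper). -/
def visited {S D : Type*} [DecidableEq D] (F : S → Finset D) (s : ℕ → S) (k : ℕ) :
    Finset D :=
  (Finset.range k).biUnion fun j => F (s j)

/-- The likelihood of the image restricted to a fragment: the product of the per-voxel
densities. -/
noncomputable def fragLik {D A : Type*} (α : A → ℝ) (I : D → A) (Fs : Finset D) : ℝ :=
  ∏ y ∈ Fs, α (I y)

lemma subset_of_not_disjoint {S D : Type*} [DecidableEq D]
    (F : S → Finset D) (s : ℕ → S)
    (hF : ∀ t t' : S, F t = F t' ∨ Disjoint (F t) (F t')) (n : ℕ)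
    (h : ¬ Disjoint (F (s n)) (visited F s n)) :
    F (s n) ⊆ visited F s n := by
  rw [visited, Finset.disjoint_biUnion_right] at h
  push_neg at h
  obtain ⟨j, hj, hd⟩ := h
  rcases hF (s n) (s j) with he | hd'
  · intro x hx
    rw [visited, Finset.mem_biUnion]
    exact ⟨j, hj, he ▸ hx⟩
  · exact absurd hd' hd

lemma image_prod_factor {S D A : Type*} [Fintype D] [DecidableEq D]
    (F : S → Finset D) (I : D → A) (α₀ α₁ : A → ℝ)
    (hα₀ : ∀ a, 0 < α₀ a)
    (hF : ∀ t t' : S, F t = F t' ∨ Disjoint (F t) (F t'))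
    (s : ℕ → S) (n : ℕ) (hn : 1 ≤ n) :
    (∏ y : D, if y ∈ visited F s n then α₁ (I y) else α₀ (I y))
    = (∏ i ∈ Finset.Ico 1 n,
        if Disjoint (F (s i)) (visited F s i)
          then fragLik α₁ I (F (s i)) / fragLik α₀ I (F (s i)) else 1) *
      (∏ y : D, if y ∈ F (s 0) then α₁ (I y) else α₀ (I y)) := by
  induction n, hn using Nat.le_induction with
  | base =>
    simp [visited]
  | succ n hn ih =>
    have hvis : visited F s (n + 1) = F (s n) ∪ visited F s n := by
      rw [visited, Finset.range_add_one, Finset.biUnion_insert]; rfl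
    rw [Finset.prod_Ico_succ_top hn]
    by_cases hd : Disjoint (F (s n)) (visited F s n)
    · have : (∏ y : D, if y ∈ visited F s (n + 1) then α₁ (I y) else α₀ (I y))
          = (∏ y : D, (if y ∈ F (s n) then α₁ (I y) / α₀ (I y) else 1) *
              (if y ∈ visited F s n then α₁ (I y) else α₀ (I y))) := by
        refine Finset.prod_congr rfl fun y _ => ?_
        rw [hvis]
        by_cases h1 : y ∈ F (s n)
        · have h2 : y ∉ visited F s n := Finset.disjoint_left.mp hd h1
          simp [h1, h2, div_mul_cancel₀ _ (hα₀ (I y)).ne']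
        · by_cases h2 : y ∈ visited F s n <;> simp [h1, h2]
      rw [this, Finset.prod_mul_distrib, ih, if_pos hd]
      have hrat : (∏ y : D, if y ∈ F (s n) then α₁ (I y) / α₀ (I y) else 1)
          = fragLik α₁ I (F (s n)) / fragLik α₀ I (F (s n)) := by
        rw [Finset.prod_ite_mem, Finset.univ_inter, fragLik, fragLik,
          Finset.prod_div_distrib]
      rw [hrat]; ring
    · have hsub := subset_of_not_disjoint F s hF n hd
      have : visited F s (n + 1) = visited F s n := by
        rw [hvis, Finset.union_eq_right.mpr hsub]
      rw [this, ih, if_neg hd]; ring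

/-- Lemma 1 of the paper: in the hidden Markov fragment model (Markov states,
conditionally independent voxel intensities which are foreground on visited fragments
and background elsewhere, fragments pairwise equal or disjoint), the joint probability
of the state sequence and the full image factors through the likelihood ratios of the
newly visited fragments and the transition probabilities. -/
theorem joint_probability_factorization
    {S D A : Type*} [Fintype D] [DecidableEq D]
    (F : S → Finset D) (I : D → A) (α₀ α₁ : A → ℝ)
    (hα₀ : ∀ a, 0 < α₀ a)
    (hF : ∀ t t' : S, F t = F t' ∨ Disjoint (F t) (F t'))
    (π : S → ℝ) (Pstep : S → S → ℝ) (n : ℕ) (hn : 1 ≤ n) (s : ℕ → S) :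
    π (s 0) * (∏ i ∈ Finset.Ico 1 n, Pstep (s (i - 1)) (s i)) *
        (∏ y : D, if y ∈ visited F s n then α₁ (I y) else α₀ (I y))
    = (∏ i ∈ Finset.Ico 1 n,
          (if Disjoint (F (s i)) (visited F s i)
            then fragLik α₁ I (F (s i)) / fragLik α₀ I (F (s i)) else 1) *
          Pstep (s (i - 1)) (s i)) *
        (π (s 0) * ∏ y : D, if y ∈ F (s 0) then α₁ (I y) else α₀ (I y)) := by
  rw [image_prod_factor F I α₀ α₁ hα₀ hF s n hn, Finset.prod_mul_distrib]
  ring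
end

section
/- Under the assumptions of the hidden Markov fragment model, the restricted joint probability of a state sequence and the image on its own fragments factors as p(s_{1:n}, I_{F_{1:n}}) = Π_{i=2}^n α₁(I_{F_i})^{δ(F_i ⊆ D \ F_{1:i-1})} · p(s_i | s_{i-1}) · p(s₁, I_{F₁}). -/
lemma visited_succ {S D : Type*} [DecidableEq D] (F : S → Finset D) (s : ℕ → S) (k : ℕ) :
    visited F s (k + 1) = visited F s k ∪ F (s k) := by
  simp [visited, Finset.range_add_one, Finset.biUnion_insert, Finset.union_comm]

lemma prod_visited {S D A : Type*} [DecidableEq D]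
    (F : S → Finset D) (I : D → A) (α₁ : A → ℝ)
    (hF : ∀ t t' : S, F t = F t' ∨ Disjoint (F t) (F t')) (s : ℕ → S) :
    ∀ n, 1 ≤ n →
    (∏ y ∈ visited F s n, α₁ (I y)) =
      (∏ i ∈ Finset.Ico 1 n,
        (if Disjoint (F (s i)) (visited F s i)
          then fragLik α₁ I (F (s i)) else 1)) * fragLik α₁ I (F (s 0)) := by
  intro n hn
  induction n with
  | zero => omega
  | succ m ih =>
    rcases Nat.eq_or_lt_of_le hn with h1 | h1
    · simp [← h1, visited, fragLik]
    · have hm : 1 ≤ m := by omega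
      rw [Finset.prod_Ico_succ_top hm, visited_succ]
      by_cases hd : Disjoint (F (s m)) (visited F s m)
      · rw [Finset.prod_union hd.symm, ih hm]
        simp [hd, fragLik]; ring
      · have hsub : F (s m) ⊆ visited F s m := by
          have : ∃ j ∈ Finset.range m, ¬ Disjoint (F (s m)) (F (s j)) := by
            by_contra hc
            push_neg at hc
            exact hd (Finset.disjoint_biUnion_right _ _ _ |>.mpr
              fun j hj => hc j hj)
          obtain ⟨j, hj, hnd⟩ := this
          rcases hF (s m) (s j) with he | hdj
          · rw [he]
            exact Finset.subset_biUnion_of_mem (fun j => F (s j)) hj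
          · exact absurd hdj hnd
        rw [Finset.union_eq_left.mpr hsub, ih hm]
        simp [hd]

/-- The restricted joint probability of a state sequence and the image on its own
visited fragments factors through the foreground likelihoods of the newly visited
fragments and the transition probabilities. -/
theorem restricted_joint_probability_factorization
    {S D A : Type*} [DecidableEq D]
    (F : S → Finset D) (I : D → A) (α₁ : A → ℝ)
    (hF : ∀ t t' : S, F t = F t' ∨ Disjoint (F t) (F t'))
    (π : S → ℝ) (Pstep : S → S → ℝ) (n : ℕ) (hn : 1 ≤ n) (s : ℕ → S) :
    π (s 0) * (∏ i ∈ Finset.Ico 1 n, Pstep (s (i - 1)) (s i)) *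
        (∏ y ∈ visited F s n, α₁ (I y))
    = (∏ i ∈ Finset.Ico 1 n,
          (if Disjoint (F (s i)) (visited F s i)
            then fragLik α₁ I (F (s i)) else 1) *
          Pstep (s (i - 1)) (s i)) *
        (π (s 0) * fragLik α₁ I (F (s 0))) := by
  rw [prod_visited F I α₁ hF s n hn, Finset.prod_mul_distrib]
  ring
end

section
/- In the hidden Markov fragment model with α₁(I_y) ≤ 1 for all voxels y, for any state sequence s_{1:n} from a fixed start state to a fixed end state that contains a repeated state, the sequence obtained by deleting all elements strictly between the two occurrences of the repeated state (keeping one occurrence) has joint probability p(s'_{1:m}, I_{F'_{1:m}}) at least as large as p(s_{1:n}, I_{F_{1:n}}). -/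
/-- The joint probability of a state sequence of length `n` and the image on its own
fragments, in the factored form of Statement 1 of the paper. -/
noncomputable def seqScore {S D A : Type*} [DecidableEq D]
    (F : S → Finset D) (I : D → A) (α₁ : A → ℝ)
    (π : S → ℝ) (Pstep : S → S → ℝ) (s : ℕ → S) (n : ℕ) : ℝ :=
  (∏ i ∈ Finset.Ico 1 n,
      (if Disjoint (F (s i)) (visited F s i) then fragLik α₁ I (F (s i)) else 1) *
      Pstep (s (i - 1)) (s i)) *
    (π (s 0) * fragLik α₁ I (F (s 0)))

private lemma prod_subset_le' {α : Type*} [DecidableEq α] (f : α → ℝ) (T U : Finset α)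
    (hTU : T ⊆ U) (h : ∀ x ∈ U, 0 ≤ f x ∧ f x ≤ 1) :
    ∏ x ∈ U, f x ≤ ∏ x ∈ T, f x := by
  rw [← Finset.prod_sdiff hTU]
  have h1 : ∏ x ∈ U \ T, f x ≤ 1 :=
    Finset.prod_le_one (fun x hx => (h x (Finset.sdiff_subset hx)).1)
      (fun x hx => (h x (Finset.sdiff_subset hx)).2)
  have h2 : 0 ≤ ∏ x ∈ T, f x :=
    Finset.prod_nonneg (fun x hx => (h x (hTU hx)).1)
  calc (∏ x ∈ U \ T, f x) * ∏ x ∈ T, f x ≤ 1 * ∏ x ∈ T, f x :=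
        mul_le_mul_of_nonneg_right h1 h2
    _ = ∏ x ∈ T, f x := one_mul _

private lemma fragLik_mem_Icc {D A : Type*} (α : A → ℝ) (I : D → A)
    (hα : ∀ a, 0 ≤ α a ∧ α a ≤ 1) (Fs : Finset D) :
    0 ≤ fragLik α I Fs ∧ fragLik α I Fs ≤ 1 :=
  ⟨Finset.prod_nonneg fun y _ => (hα (I y)).1,
   Finset.prod_le_one (fun y _ => (hα (I y)).1) (fun y _ => (hα (I y)).2)⟩

private lemma frag_prod_eq {S D A : Type*} [DecidableEq D]
    (F : S → Finset D) (I : D → A) (α₁ : A → ℝ)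
    (hF : ∀ t t' : S, F t = F t' ∨ Disjoint (F t) (F t')) (s : ℕ → S) (n : ℕ) :
    (∏ i ∈ Finset.range n,
        (if Disjoint (F (s i)) (visited F s i) then fragLik α₁ I (F (s i)) else 1))
      = ∏ Fs ∈ (Finset.range n).image (fun i => F (s i)), fragLik α₁ I Fs := by
  induction n with
  | zero => simp
  | succ n ih =>
    rw [Finset.prod_range_succ, Finset.range_add_one, Finset.image_insert, ih]
    by_cases hmem : F (s n) ∈ (Finset.range n).image (fun i => F (s i))
    · rw [Finset.insert_eq_self.mpr hmem]
      -- the extra factor is 1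
      have h1 : (if Disjoint (F (s n)) (visited F s n) then fragLik α₁ I (F (s n)) else 1) = 1 := by
        split_ifs with hd
        · -- F (s n) equals some earlier fragment, which is inside `visited`, so it's empty
          obtain ⟨m, hm, hFm⟩ := Finset.mem_image.mp hmem
          have hsub : F (s m) ⊆ visited F s n :=
            Finset.subset_biUnion_of_mem (fun i => F (s i)) hm
          have : Disjoint (F (s n)) (F (s n)) :=
            hd.mono_right (hFm ▸ hsub)
          have hempty : F (s n) = ∅ := by simpa using disjoint_self.mp this
          simp [fragLik, hempty]
        · rfl
      rw [h1, mul_one]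
    · -- first occurrence: disjoint from all earlier fragments
      have hd : Disjoint (F (s n)) (visited F s n) := by
        rw [visited, Finset.disjoint_biUnion_right]
        intro m hm
        rcases hF (s n) (s m) with heq | hdis
        · exact absurd (Finset.mem_image.mpr ⟨m, hm, heq.symm⟩) hmem
        · exact hdis
      rw [if_pos hd, Finset.prod_insert hmem, mul_comm]

private lemma seqScore_factored {S D A : Type*} [DecidableEq D]
    (F : S → Finset D) (I : D → A) (α₁ : A → ℝ)
    (hF : ∀ t t' : S, F t = F t' ∨ Disjoint (F t) (F t'))
    (π : S → ℝ) (Pstep : S → S → ℝ) (s : ℕ → S) (n : ℕ) (hn : 0 < n) :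
    seqScore F I α₁ π Pstep s n =
      π (s 0) * ((∏ Fs ∈ (Finset.range n).image (fun i => F (s i)), fragLik α₁ I Fs) *
        ∏ i ∈ Finset.Ico 1 n, Pstep (s (i - 1)) (s i)) := by
  rw [seqScore, Finset.prod_mul_distrib, ← frag_prod_eq F I α₁ hF s n]
  rw [Finset.range_eq_Ico, Finset.prod_eq_prod_Ico_succ_bot hn]
  have h0 : visited F s 0 = ∅ := by simp [visited]
  rw [h0]
  simp only [Finset.disjoint_empty_right, if_true]
  ring

/-- When all per-voxel foreground densities and transition probabilities lie in `[0,1]`,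
deleting the portion of a state sequence strictly between two occurrences of a repeated
state (keeping one occurrence) does not decrease the joint probability. -/
theorem cycle_deletion_increases_probability
    {S D A : Type*} [DecidableEq D]
    (F : S → Finset D) (I : D → A) (α₁ : A → ℝ)
    (hα₁ : ∀ a, 0 ≤ α₁ a ∧ α₁ a ≤ 1)
    (hF : ∀ t t' : S, F t = F t' ∨ Disjoint (F t) (F t'))
    (π : S → ℝ) (hπ : ∀ t, 0 ≤ π t)
    (Pstep : S → S → ℝ) (hP : ∀ t t', 0 ≤ Pstep t t' ∧ Pstep t t' ≤ 1)
    (n : ℕ) (s : ℕ → S) (j k : ℕ) (hjk : j < k) (hkn : k < n) (hrep : s j = s k) :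
    seqScore F I α₁ π Pstep s n ≤
      seqScore F I α₁ π Pstep
        (fun i => if i ≤ j then s i else s (i + (k - j))) (n - (k - j)) := by
  set d := k - j with hd
  set m := n - d with hm
  set s' : ℕ → S := fun i => if i ≤ j then s i else s (i + d) with hs'
  have hd1 : 1 ≤ d := by omega
  have hmn : m ≤ n := by omega
  have hm1 : 0 < m := by omega
  have hn1 : 0 < n := by omega
  have hs'0 : s' 0 = s 0 := by simp [hs']
  -- reindexing map
  set σ : ℕ → ℕ := fun i => if i ≤ j then i else i + d with hσ
  -- transition products
  set t : ℕ → ℝ := fun i => Pstep (s (i - 1)) (s i) with ht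
  have htrans : (∏ i ∈ Finset.Ico 1 m, Pstep (s' (i - 1)) (s' i))
      = ∏ i ∈ (Finset.Ico 1 m).image σ, t i := by
    rw [Finset.prod_image]
    · apply Finset.prod_congr rfl
      intro i hi
      obtain ⟨hi1, him⟩ := Finset.mem_Ico.mp hi
      by_cases hij : i ≤ j
      · have : σ i = i := if_pos hij
        rw [this, ht]
        have h1 : s' (i - 1) = s (i - 1) := by
          simp only [hs']; rw [if_pos (by omega)]
        have h2 : s' i = s i := by simp only [hs']; rw [if_pos hij]
        rw [h1, h2]
      · have hσi : σ i = i + d := if_neg hij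
        rw [hσi, ht]
        have h2 : s' i = s (i + d) := by simp only [hs']; rw [if_neg hij]
        have h1 : s' (i - 1) = s (i + d - 1) := by
          simp only [hs']
          by_cases hij1 : i - 1 ≤ j
          · rw [if_pos hij1]
            have hij1' : i = j + 1 := by omega
            have : i + d - 1 = k := by omega
            rw [this]
            have : i - 1 = j := by omega
            rw [this, hrep]
          · rw [if_neg hij1]
            congr 1
            omega
        rw [h1, h2]
    · intro a ha b hb hab
      simp only [hσ] at hab
      split_ifs at hab <;> omega
  have hσsub : (Finset.Ico 1 m).image σ ⊆ Finset.Ico 1 n := by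
    intro x hx
    obtain ⟨i, hi, hix⟩ := Finset.mem_image.mp hx
    obtain ⟨hi1, him⟩ := Finset.mem_Ico.mp hi
    simp only [hσ] at hix
    rw [Finset.mem_Ico]
    split_ifs at hix <;> omega
  -- fragment sets
  have hfragsub : (Finset.range m).image (fun i => F (s' i)) ⊆
      (Finset.range n).image (fun i => F (s i)) := by
    intro x hx
    obtain ⟨i, hi, hix⟩ := Finset.mem_image.mp hx
    rw [Finset.mem_range] at hi
    simp only [hs'] at hix
    by_cases hij : i ≤ j
    · rw [if_pos hij] at hix
      exact Finset.mem_image.mpr ⟨i, Finset.mem_range.mpr (by omega), hix⟩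
    · rw [if_neg hij] at hix
      exact Finset.mem_image.mpr ⟨i + d, Finset.mem_range.mpr (by omega), hix⟩
  -- the products compare
  have hFbound := fun Fs => fragLik_mem_Icc α₁ I hα₁ Fs
  have hfrag_le : (∏ Fs ∈ (Finset.range n).image (fun i => F (s i)), fragLik α₁ I Fs)
      ≤ ∏ Fs ∈ (Finset.range m).image (fun i => F (s' i)), fragLik α₁ I Fs :=
    prod_subset_le' _ _ _ hfragsub (fun x _ => hFbound x)
  have htrans_le : (∏ i ∈ Finset.Ico 1 n, t i) ≤ ∏ i ∈ (Finset.Ico 1 m).image σ, t i :=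
    prod_subset_le' _ _ _ hσsub (fun x _ => hP _ _)
  -- assemble
  rw [seqScore_factored F I α₁ hF π Pstep s n hn1,
      seqScore_factored F I α₁ hF π Pstep s' m hm1, hs'0, htrans]
  apply mul_le_mul_of_nonneg_left _ (hπ _)
  have h1 : 0 ≤ ∏ i ∈ Finset.Ico 1 n, t i :=
    Finset.prod_nonneg fun i _ => (hP _ _).1
  have h2 : 0 ≤ ∏ Fs ∈ (Finset.range m).image (fun i => F (s' i)), fragLik α₁ I Fs :=
    Finset.prod_nonneg fun Fs _ => (hFbound Fs).1
  exact mul_le_mul hfrag_le htrans_le h1 h2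
end
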